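/- The projection functor π̄ : fat Delta → Δ₊ sending an object η : [m] ↠ [n] to [m] and a commutative square to its top arrow is a Grothendieck opfibration. -/

import Mathlib

open CategoryTheory SimplexCategory

/-- Fat Delta: objects are epimorphisms in the simplex category. -/
structure FatDelta : Type where
  m : ℕ
  n : ℕ
  hom : SimplexCategory.mk m ⟶ SimplexCategory.mk n
  epi : Epi hom

namespace FatDelta

/-- Morphisms of fat Delta: commutative squares with a monomorphism on top. -/
structure Hom (A B : FatDelta) : Type where
  top : SimplexCategory.mk A.m ⟶ SimplexCategory.mk B.m
  bot : SimplexCategory.mk A.n ⟶ SimplexCategory.mk B.n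
  mono : Mono top
  comm : A.hom ≫ bot = top ≫ B.hom

theorem Hom.ext' {A B : FatDelta} {f g : Hom A B} (h1 : f.top = g.top)
    (h2 : f.bot = g.bot) : f = g := by
  cases f; cases g; simp_all

instance : Category FatDelta where
  Hom := Hom
  id A := ⟨𝟙 _, 𝟙 _, inferInstance, by simp⟩
  comp f g := ⟨f.top ≫ g.top, f.bot ≫ g.bot,
    by haveI := f.mono; haveI := g.mono; exact mono_comp _ _,
    by rw [← Category.assoc, f.comm, Category.assoc, g.comm, Category.assoc]⟩
  id_comp f := Hom.ext' (by simp) (by simp)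
  comp_id f := Hom.ext' (by simp) (by simp)
  assoc f g h := Hom.ext' (by simp) (by simp)

@[simp] theorem comp_top {A B C : FatDelta} (f : A ⟶ B) (g : B ⟶ C) :
    Hom.top (f ≫ g) = Hom.top f ≫ Hom.top g := rfl

@[simp] theorem comp_bot {A B C : FatDelta} (f : A ⟶ B) (g : B ⟶ C) :
    Hom.bot (f ≫ g) = Hom.bot f ≫ Hom.bot g := rfl

@[simp] theorem id_top {A : FatDelta} : Hom.top (𝟙 A) = 𝟙 _ := rfl
@[simp] theorem id_bot {A : FatDelta} : Hom.bot (𝟙 A) = 𝟙 _ := rfl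

end FatDelta

/-- The semisimplex category `Δ₊`: the simplex category restricted to monomorphisms. -/
structure SemiSimplex : Type where
  n : ℕ

namespace SemiSimplex

structure Hom (a b : SemiSimplex) : Type where
  f : SimplexCategory.mk a.n ⟶ SimplexCategory.mk b.n
  mono : Mono f

theorem Hom.ext' {a b : SemiSimplex} {f g : Hom a b} (h : f.f = g.f) : f = g := by
  cases f; cases g; simp_all

instance : Category SemiSimplex where
  Hom := Hom
  id a := ⟨𝟙 _, inferInstance⟩
  comp f g := ⟨f.f ≫ g.f, by haveI := f.mono; haveI := g.mono; exact mono_comp _ _⟩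
  id_comp f := Hom.ext' (by simp)
  comp_id f := Hom.ext' (by simp)
  assoc f g h := Hom.ext' (by simp)

end SemiSimplex

/-- The projection `π̄ : fat Delta ⥤ Δ₊`, sending an epimorphism `η : [m] ↠ [n]` to `[m]`
and a square to its top arrow. -/
def fatDeltaProj : FatDelta ⥤ SemiSimplex where
  obj A := ⟨A.m⟩
  map g := ⟨FatDelta.Hom.top g, FatDelta.Hom.mono g⟩
  map_id A := SemiSimplex.Hom.ext' rfl
  map_comp f g := SemiSimplex.Hom.ext' rfl

section OpFibAux

open Classical in
/-- Number of `C`-steps below `t`. -/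
noncomputable def colCnt (C : ℕ → Prop) : ℕ → ℕ
  | 0 => 0
  | t + 1 => colCnt C t + (if C t then 1 else 0)

theorem colCnt_le (C : ℕ → Prop) (t : ℕ) : colCnt C t ≤ t := by
  induction t with
  | zero => simp [colCnt]
  | succ t ih => rw [colCnt]; split <;> omega

/-- The quotient map on ℕ collapsing all `C`-steps. -/
noncomputable def kraw (C : ℕ → Prop) (t : ℕ) : ℕ := t - colCnt C t

theorem kraw_succ_of_col (C : ℕ → Prop) {t : ℕ} (h : C t) :
    kraw C (t + 1) = kraw C t := by
  have h1 := colCnt_le C t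
  simp only [kraw, colCnt]
  rw [if_pos h]
  omega

theorem kraw_succ_of_not (C : ℕ → Prop) {t : ℕ} (h : ¬ C t) :
    kraw C (t + 1) = kraw C t + 1 := by
  have h1 := colCnt_le C t
  simp only [kraw, colCnt]
  rw [if_neg h]
  omega

theorem kraw_mono (C : ℕ → Prop) : Monotone (kraw C) := by
  apply monotone_nat_of_le_succ
  intro t
  by_cases h : C t
  · rw [kraw_succ_of_col C h]
  · rw [kraw_succ_of_not C h]; omega

theorem kraw_surj (C : ℕ → Prop) (t : ℕ) : ∀ y, y ≤ kraw C t → ∃ x, x ≤ t ∧ kraw C x = y := by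
  induction t with
  | zero =>
    intro y hy
    refine ⟨0, le_rfl, ?_⟩
    simp only [kraw, colCnt] at hy ⊢
    omega
  | succ t ih =>
    intro y hy
    rcases le_or_gt y (kraw C t) with h | h
    · obtain ⟨x, hx, hxe⟩ := ih y h
      exact ⟨x, by omega, hxe⟩
    · refine ⟨t + 1, le_rfl, ?_⟩
      have h2 : kraw C (t + 1) ≤ kraw C t + 1 := by
        by_cases hc : C t
        · rw [kraw_succ_of_col C hc]; omega
        · rw [kraw_succ_of_not C hc]
      omega

theorem col_of_fiber (C : ℕ → Prop) {x k y : ℕ} (h1 : x ≤ k) (h2 : k < y)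
    (he : kraw C x = kraw C y) : C k := by
  by_contra hc
  have e1 := kraw_succ_of_not C hc
  have m1 : kraw C x ≤ kraw C k := kraw_mono C h1
  have m2 : kraw C (k + 1) ≤ kraw C y := kraw_mono C h2
  omega

theorem kraw_eq_add (C : ℕ → Prop) : ∀ (d x : ℕ), (∀ k, x ≤ k → k < x + d → C k) →
    kraw C x = kraw C (x + d)
  | 0, _, _ => rfl
  | d + 1, x, h => by
    have h1 := kraw_eq_add C d x (fun k hk1 hk2 => h k hk1 (by omega))
    have h2 := kraw_succ_of_col C (h (x + d) (by omega) (by omega))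
    rw [h1]
    exact h2.symm

theorem kraw_eq_of_run (C : ℕ → Prop) {x y : ℕ} (hxy : x ≤ y)
    (h : ∀ k, x ≤ k → k < y → C k) : kraw C x = kraw C y := by
  obtain ⟨d, rfl⟩ : ∃ d, y = x + d := ⟨y - x, by omega⟩
  exact kraw_eq_add C d x h

theorem const_of_kraw (C : ℕ → Prop) {α : Sort*} (w : ℕ → α)
    (hw : ∀ k, C k → w k = w (k + 1)) :
    ∀ (d x : ℕ), kraw C x = kraw C (x + d) → w x = w (x + d)
  | 0, _, _ => rfl
  | d + 1, x, he => by
    have he' : kraw C x = kraw C (x + d + 1) := by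
      rw [show x + d + 1 = x + (d + 1) by omega]; exact he
    have hm1 : kraw C x ≤ kraw C (x + d) := kraw_mono C (by omega)
    have hm2 : kraw C (x + d) ≤ kraw C (x + d + 1) := kraw_mono C (by omega)
    have h1 : kraw C x = kraw C (x + d) := by omega
    have hcol : C (x + d) := col_of_fiber C (le_refl (x + d)) (by omega)
      (show kraw C (x + d) = kraw C (x + d + 1) by omega)
    rw [const_of_kraw C w hw d x h1]
    exact hw (x + d) hcol

theorem const_of_kraw' (C : ℕ → Prop) {α : Sort*} (w : ℕ → α)
    (hw : ∀ k, C k → w k = w (k + 1)) {x y : ℕ} (he : kraw C x = kraw C y) : w x = w y := by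
  rcases le_total x y with h | h
  · obtain ⟨d, rfl⟩ : ∃ d, y = x + d := ⟨y - x, by omega⟩
    exact const_of_kraw C w hw d x he
  · obtain ⟨d, rfl⟩ : ∃ d, x = y + d := ⟨x - y, by omega⟩
    exact (const_of_kraw C w hw d y he.symm).symm

end OpFibAux

section OpFibCol

variable {m n m' : ℕ} (η : Fin (m + 1) →o Fin (n + 1)) (u : Fin (m + 1) →o Fin (m' + 1))

/-- The step `k → k+1` in `[m']` is collapsed by the pushforward of `η` along `u`. -/
def IsCol (k : ℕ) : Prop :=
  ∃ i : Fin m, η i.castSucc = η i.succ ∧ (u i.castSucc : ℕ) ≤ k ∧ k + 1 ≤ (u i.succ : ℕ)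

theorem isCol_lt {k : ℕ} (h : IsCol η u k) : k < m' := by
  obtain ⟨i, -, -, hk⟩ := h
  have := (u i.succ).isLt
  omega

theorem isCol_run {x y : Fin (m + 1)} (hxy : x ≤ y) (he : η x = η y) {k : ℕ}
    (hk1 : (u x : ℕ) ≤ k) (hk2 : k < (u y : ℕ)) : IsCol η u k := by
  classical
  set P : ℕ → Prop := fun j => ∃ z : Fin (m + 1), z.1 = j ∧ (u z : ℕ) ≤ k with hPdef
  have hPx : P x.1 := ⟨x, rfl, hk1⟩
  have hxy' : x.1 ≤ y.1 := hxy
  have hxi : x.1 ≤ Nat.findGreatest P y.1 := Nat.le_findGreatest hxy' hPx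
  obtain ⟨z, hz1, hzk⟩ : P (Nat.findGreatest P y.1) := Nat.findGreatest_spec hxy' hPx
  set i := Nat.findGreatest P y.1 with hidef
  clear_value i
  have hiy : i < y.1 := by
    by_contra hc
    push_neg at hc
    have h2 : (u y : ℕ) ≤ (u z : ℕ) := u.monotone (Fin.le_def.mpr (by omega))
    omega
  have hym : y.1 ≤ m := Nat.le_of_lt_succ y.isLt
  have him : i < m := by omega
  have hnP : ¬ P (i + 1) :=
    Nat.findGreatest_is_greatest (by rw [← hidef]; omega) (by omega)
  have hzi : z = (⟨i, him⟩ : Fin m).castSucc := Fin.ext hz1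
  rw [hzi] at hzk
  have hk3 : k + 1 ≤ (u (⟨i, him⟩ : Fin m).succ : ℕ) := by
    by_contra hc
    exact hnP ⟨(⟨i, him⟩ : Fin m).succ, rfl, by omega⟩
  have h1 : η x ≤ η (⟨i, him⟩ : Fin m).castSucc := η.monotone (Fin.le_def.mpr hxi)
  have h2 : η (⟨i, him⟩ : Fin m).castSucc ≤ η (⟨i, him⟩ : Fin m).succ :=
    η.monotone (Fin.le_def.mpr (Nat.le_succ i))
  have h3 : η (⟨i, him⟩ : Fin m).succ ≤ η y := η.monotone (Fin.le_def.mpr hiy)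
  exact ⟨⟨i, him⟩, le_antisymm h2 (h3.trans (he.symm.le.trans h1)), hzk, hk3⟩

/-- Size of the pushforward quotient. -/
noncomputable def pushN : ℕ := kraw (IsCol η u) m'

/-- The pushforward epimorphism `[m'] ↠ [pushN]`. -/
noncomputable def pushκ : Fin (m' + 1) →o Fin (pushN η u + 1) where
  toFun x := ⟨kraw (IsCol η u) x.1,
    Nat.lt_succ_of_le (kraw_mono _ (Nat.le_of_lt_succ x.isLt))⟩
  monotone' x y h := kraw_mono _ (show x.1 ≤ y.1 from h)

theorem pushκ_surj : Function.Surjective (pushκ η u) := by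
  intro z
  obtain ⟨x, hx, he⟩ := kraw_surj (IsCol η u) m' z.1 (Nat.le_of_lt_succ z.isLt)
  exact ⟨⟨x, by omega⟩, Fin.ext he⟩

theorem pushκ_eq_of_eta {x x' : Fin (m + 1)} (he : η x = η x') :
    pushκ η u (u x) = pushκ η u (u x') := by
  apply Fin.ext
  show kraw _ (u x).1 = kraw _ (u x').1
  rcases le_total x x' with h | h
  · exact kraw_eq_of_run _ (u.monotone h)
      (fun k hk1 hk2 => isCol_run η u h he hk1 hk2)
  · exact (kraw_eq_of_run _ (u.monotone h)
      (fun k hk1 hk2 => isCol_run η u h he.symm hk1 hk2)).symm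

theorem exists_bot (hs : Function.Surjective η) :
    ∃ bot : Fin (n + 1) →o Fin (pushN η u + 1),
      ∀ x : Fin (m + 1), bot (η x) = pushκ η u (u x) := by
  classical
  choose sec hsec using hs
  refine ⟨⟨fun y => pushκ η u (u (sec y)), ?_⟩, ?_⟩
  · intro y y' hyy'
    rcases le_total (sec y) (sec y') with h | h
    · exact (pushκ η u).monotone (u.monotone h)
    · have h2 : η (sec y') ≤ η (sec y) := η.monotone h
      rw [hsec, hsec] at h2
      obtain rfl := le_antisymm hyy' h2
      exact le_rfl
  · intro x
    exact pushκ_eq_of_eta η u (hsec (η x))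

/-- Extension of an order hom on `Fin (m'+1)` to all of `ℕ`. -/
noncomputable def wExt {q : ℕ} (m' : ℕ) (w : Fin (m' + 1) →o Fin (q + 1)) (t : ℕ) :
    Fin (q + 1) :=
  w ⟨min t m', Nat.lt_succ_of_le (Nat.min_le_right t m')⟩

theorem wExt_mono {q : ℕ} (m' : ℕ) (w : Fin (m' + 1) →o Fin (q + 1)) {s t : ℕ}
    (h : s ≤ t) : wExt m' w s ≤ wExt m' w t :=
  w.monotone (Fin.mk_le_mk.mpr (by omega))

theorem wExt_eq {q : ℕ} (m' : ℕ) (w : Fin (m' + 1) →o Fin (q + 1)) (t : ℕ) (h : t ≤ m') :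
    wExt m' w t = w ⟨t, by omega⟩ :=
  congrArg w (Fin.ext (min_eq_left h))

theorem exists_beta {q : ℕ} (w : Fin (m' + 1) →o Fin (q + 1)) (v : Fin (n + 1) → Fin (q + 1))
    (hcomm : ∀ x : Fin (m + 1), w (u x) = v (η x)) :
    ∃ β : Fin (pushN η u + 1) →o Fin (q + 1),
      ∀ x : Fin (m' + 1), β (pushκ η u x) = w x := by
  classical
  have hwcol : ∀ k, IsCol η u k → wExt m' w k = wExt m' w (k + 1) := by
    rintro k ⟨i, heq, hk1, hk2⟩
    have hklt : k + 1 ≤ m' := by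
      have := (u i.succ).isLt
      omega
    rw [wExt_eq m' w k (by omega), wExt_eq m' w (k + 1) hklt]
    have hle1 : w ⟨k + 1, by omega⟩ ≤ w (u i.succ) :=
      w.monotone (Fin.le_def.mpr hk2)
    have hle2 : w (u i.castSucc) ≤ w ⟨k, by omega⟩ :=
      w.monotone (Fin.le_def.mpr hk1)
    have heq2 : w (u i.castSucc) = w (u i.succ) := by
      rw [hcomm i.castSucc, hcomm i.succ]
      exact congrArg v heq
    exact le_antisymm (w.monotone (Fin.le_def.mpr (Nat.le_succ k)))
      ((hle1.trans_eq heq2.symm).trans hle2)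
  have hpick : ∀ z : Fin (pushN η u + 1), ∃ x, x ≤ m' ∧ kraw (IsCol η u) x = z.1 := fun z =>
    kraw_surj _ m' z.1 (Nat.le_of_lt_succ z.isLt)
  choose xc hxc1 hxc2 using hpick
  have hconst : ∀ {s t : ℕ}, kraw (IsCol η u) s = kraw (IsCol η u) t →
      wExt m' w s = wExt m' w t := fun h => const_of_kraw' _ _ hwcol h
  refine ⟨⟨fun z => wExt m' w (xc z), ?_⟩, ?_⟩
  · intro z z' hz
    rcases le_total (xc z) (xc z') with h | h
    · exact wExt_mono m' w h
    · have h2 : kraw (IsCol η u) (xc z') ≤ kraw (IsCol η u) (xc z) := kraw_mono _ h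
      have hz' : z.1 ≤ z'.1 := hz
      have e1 := hxc2 z
      have e2 := hxc2 z'
      exact le_of_eq (hconst (by omega))
  · intro x
    show wExt m' w (xc (pushκ η u x)) = w x
    have h1 := hconst (s := xc (pushκ η u x)) (t := x.1) (hxc2 (pushκ η u x))
    rw [h1, wExt_eq m' w x.1 (Nat.le_of_lt_succ x.isLt)]

end OpFibCol

/-- The projection `π̄ : fat Delta ⥤ Δ₊` is a Grothendieck opfibration: every arrow of
`Δ₊` out of the image of an object of fat Delta has a cocartesian lift. -/
theorem fatDeltaProj_isOpFibration :
    ∀ (a : FatDelta) (S : SemiSimplex) (f : fatDeltaProj.obj a ⟶ S),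
      ∃ (b : FatDelta) (hb : fatDeltaProj.obj b = S) (φ : a ⟶ b),
        fatDeltaProj.IsCocartesian f φ := by
  rintro ⟨m, n, ηh, ηepi⟩ ⟨m'⟩ f
  set η : Fin (m + 1) →o Fin (n + 1) := ηh.toOrderHom with hηdef
  set u : Fin (m + 1) →o Fin (m' + 1) := f.f.toOrderHom with hudef
  have hηsurj : Function.Surjective η := SimplexCategory.epi_iff_surjective.mp ηepi
  obtain ⟨bot, hbot⟩ := exists_bot η u hηsurj
  have hκepi : Epi (mkHom (pushκ η u)) :=
    SimplexCategory.epi_iff_surjective.mpr (pushκ_surj η u)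
  have hcommφ : ηh ≫ mkHom bot = f.f ≫ mkHom (pushκ η u) := by
    apply SimplexCategory.Hom.ext
    ext x
    exact congrArg Fin.val (hbot x)
  refine ⟨⟨m', pushN η u, mkHom (pushκ η u), hκepi⟩, rfl,
    ⟨f.f, mkHom bot, f.mono, hcommφ⟩, ?_⟩
  have hlift : fatDeltaProj.IsHomLift f
      (⟨f.f, mkHom bot, f.mono, hcommφ⟩ :
        (⟨m, n, ηh, ηepi⟩ : FatDelta) ⟶ ⟨m', pushN η u, mkHom (pushκ η u), hκepi⟩) := by
    exact CategoryTheory.IsHomLift.map fatDeltaProj (⟨f.f, mkHom bot, f.mono, hcommφ⟩ :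
      (⟨m, n, ηh, ηepi⟩ : FatDelta) ⟶ ⟨m', pushN η u, mkHom (pushκ η u), hκepi⟩)
  refine { toIsHomLift := hlift, universal_property := ?_ }
  intro b' φ' hφ'
  have hcod : fatDeltaProj.obj b' = (⟨m'⟩ : SemiSimplex) :=
    CategoryTheory.IsHomLift.codomain_eq fatDeltaProj f φ'
  obtain ⟨mb, nb, w, wepi⟩ := b'
  obtain rfl : m' = mb := (congrArg SemiSimplex.n hcod).symm
  have htop : f = fatDeltaProj.map φ' :=
    @CategoryTheory.IsHomLift.eq_of_isHomLift _ _ _ _ fatDeltaProj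
      ⟨m, n, ηh, ηepi⟩ ⟨m', nb, w, wepi⟩ f φ' hφ'
  have htopf : f.f = φ'.top := congrArg SemiSimplex.Hom.f htop
  have hcomm' : ηh ≫ φ'.bot = φ'.top ≫ w := φ'.comm
  obtain ⟨β, hβ⟩ := exists_beta η u w.toOrderHom (fun y => φ'.bot.toOrderHom y) (by
    intro x
    have hp := congrArg (fun (g : SimplexCategory.mk m ⟶ SimplexCategory.mk nb) =>
      g.toOrderHom x) hcomm'
    simp only [SimplexCategory.comp_toOrderHom, OrderHom.comp_coe, Function.comp_apply] at hp
    rw [← htopf] at hp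
    exact hp.symm)
  have hκβ : mkHom (pushκ η u) ≫ mkHom β = w := by
    apply SimplexCategory.Hom.ext
    ext x
    exact congrArg Fin.val (hβ x)
  refine ⟨⟨𝟙 _, mkHom β, inferInstance, ?_⟩, ⟨?_, ?_⟩, ?_⟩
  · show mkHom (pushκ η u) ≫ mkHom β = 𝟙 _ ≫ w
    rw [Category.id_comp]
    exact hκβ
  · -- IsHomLift of 𝟙
    exact CategoryTheory.IsHomLift.of_fac fatDeltaProj (𝟙 (⟨m'⟩ : SemiSimplex)) _ rfl rfl
      ((SemiSimplex.Hom.ext' rfl :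
        (𝟙 (⟨m'⟩ : SemiSimplex)) = fatDeltaProj.map
        (⟨𝟙 _, mkHom β, inferInstance, by rw [Category.id_comp]; exact hκβ⟩ :
          (⟨m', pushN η u, mkHom (pushκ η u), hκepi⟩ : FatDelta) ⟶ ⟨m', nb, w, wepi⟩)))
  · -- φ ≫ χ = φ'
    apply FatDelta.Hom.ext'
    · show f.f ≫ 𝟙 _ = φ'.top
      rw [Category.comp_id]
      exact htopf
    · show mkHom bot ≫ mkHom β = φ'.bot
      haveI : Epi ηh := ηepi
      rw [← cancel_epi ηh, ← Category.assoc, hcommφ]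
      exact (Category.assoc _ _ _).trans (by rw [hκβ, hcomm', ← htopf])
  · -- uniqueness
    rintro χ₂ ⟨hl2, -⟩
    haveI := hl2
    have ht2 : (𝟙 (⟨m'⟩ : SemiSimplex)) = fatDeltaProj.map χ₂ :=
      @CategoryTheory.IsHomLift.eq_of_isHomLift _ _ _ _ fatDeltaProj
        ⟨m', pushN η u, mkHom (pushκ η u), hκepi⟩ ⟨m', nb, w, wepi⟩ _ χ₂ hl2
    have ht2f : χ₂.top = 𝟙 (SimplexCategory.mk m') := (congrArg SemiSimplex.Hom.f ht2).symm
    have hc2 : mkHom (pushκ η u) ≫ χ₂.bot = χ₂.top ≫ w := χ₂.comm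
    apply FatDelta.Hom.ext'
    · exact ht2f
    · haveI : Epi (mkHom (pushκ η u)) := hκepi
      rw [← cancel_epi (mkHom (pushκ η u)), hκβ, hc2, ht2f, Category.id_comp]
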